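/- arXiv:1204.0665 — 2 statements merged into one kernel-verified Lean document; each statement's English description precedes it below -/
import Mathlib

section
/- Let X be a diagonal n×n matrix with diagonal entries λ_1 > λ_2 ≥ ... ≥ λ_n (we only need λ_1 ≥ λ_i), let v ∈ R^n have all coordinates nonzero, and let ε > 0. The largest eigenvalue of X + (ε/n) v v^T equals λ_1 + t*, where t* > 0 is the unique positive root of the secular equation s(t) = n/ε − v_1²/t − Σ_{i=2}^n v_i²/((λ_1 − λ_i) + t) = 0, and t* ≥ ε v_1²/n. -/
open MeasureTheory ProbabilityTheory Matrix
open scoped Classical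

noncomputable def stdGaussian (n : ℕ) : Measure (Fin n → ℝ) :=
  Measure.pi fun _ => gaussianReal 0 1

instance (n : ℕ) : IsProbabilityMeasure (stdGaussian n) :=
  inferInstanceAs (IsProbabilityMeasure (Measure.pi fun _ : Fin n => gaussianReal 0 1))

theorem symPart_isHermitian {n : ℕ} (X : Matrix (Fin n) (Fin n) ℝ) :
    ((2⁻¹ : ℝ) • (X + Xᵀ)).IsHermitian := by
  unfold Matrix.IsHermitian
  ext i j
  simp [Matrix.conjTranspose_apply, Matrix.transpose_apply, Matrix.add_apply]
  ring

/-- The eigenvalues (with multiplicity) of a real symmetric matrix, read off the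
symmetric part `(X + Xᵀ)/2` so as to be defined for every matrix. -/
noncomputable def eigs {n : ℕ} (X : Matrix (Fin n) (Fin n) ℝ) : Fin n → ℝ :=
  (symPart_isHermitian X).eigenvalues

/-- Largest eigenvalue `λ_max`. -/
noncomputable def lamMax {n : ℕ} (X : Matrix (Fin n) (Fin n) ℝ) : ℝ :=
  ⨆ i, eigs X i

/-- Second largest eigenvalue (with multiplicity) `λ₂`. -/
noncomputable def lam2 {n : ℕ} (X : Matrix (Fin n) (Fin n) ℝ) : ℝ :=
  ⨅ i, ⨆ j : {j : Fin n // j ≠ i}, eigs X j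

/-- Multiplicity of the largest eigenvalue. -/
noncomputable def lamMaxMult {n : ℕ} (X : Matrix (Fin n) (Fin n) ℝ) : ℕ :=
  (Finset.univ.filter fun i => eigs X i = lamMax X).card
set_option maxHeartbeats 1000000 in
theorem stmt5 {n : ℕ} (hn : 0 < n) (d : Fin n → ℝ) (hd : ∀ i, d i ≤ d ⟨0, hn⟩)
    (v : Fin n → ℝ) (hv : ∀ i, v i ≠ 0) (ε : ℝ) (hε : 0 < ε) :
    ∃ t : ℝ, 0 < t ∧
      (n / ε - v ⟨0, hn⟩ ^ 2 / t -
        ∑ i ∈ Finset.univ.erase ⟨0, hn⟩, v i ^ 2 / ((d ⟨0, hn⟩ - d i) + t)) = 0 ∧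
      (∀ t' : ℝ, 0 < t' →
        (n / ε - v ⟨0, hn⟩ ^ 2 / t' -
          ∑ i ∈ Finset.univ.erase ⟨0, hn⟩, v i ^ 2 / ((d ⟨0, hn⟩ - d i) + t')) = 0 →
        t' = t) ∧
      lamMax (Matrix.diagonal d + (ε / n) • Matrix.vecMulVec v v) = d ⟨0, hn⟩ + t ∧
      ε * v ⟨0, hn⟩ ^ 2 / n ≤ t := by
  classical
  haveI : Nonempty (Fin n) := ⟨⟨0, hn⟩⟩
  set i0 : Fin n := ⟨0, hn⟩ with hi0
  have hn0 : (0 : ℝ) < n := by exact_mod_cast hn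
  set c : Fin n → ℝ := fun i => d i0 - d i with hc
  have hc0 : c i0 = 0 := by simp [hc]
  have hcnn : ∀ i, 0 ≤ c i := fun i => by simp [hc]; exact hd i
  set S : ℝ → ℝ := fun t => ∑ i, v i ^ 2 / (c i + t) with hS
  set g : ℝ → ℝ := fun t => (n : ℝ) / ε - S t with hg
  -- the statement's expression equals g
  have hexpr : ∀ t : ℝ,
      ((n : ℝ) / ε - v i0 ^ 2 / t -
        ∑ i ∈ Finset.univ.erase i0, v i ^ 2 / ((d i0 - d i) + t)) = g t := by
    intro t
    have := Finset.add_sum_erase Finset.univ (fun i => v i ^ 2 / (c i + t))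
      (Finset.mem_univ i0)
    simp only [hg, hS, ← this, hc0, zero_add]
    ring
  -- monotonicity
  have hmono : StrictMonoOn g (Set.Ioi (0:ℝ)) := by
    intro a ha b hb hab
    simp only [Set.mem_Ioi] at ha hb
    have hS' : S b < S a := by
      apply Finset.sum_lt_sum_of_nonempty ⟨i0, Finset.mem_univ i0⟩
      intro i _
      have hvi : 0 < v i ^ 2 := pow_two_pos_of_ne_zero (hv i)
      have h1 : 0 < c i + a := by have := hcnn i; linarith
      exact div_lt_div_of_pos_left hvi h1 (by linarith)
    simp only [hg]
    linarith
  -- negativity for small t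
  have hneg : ∀ t : ℝ, 0 < t → t < ε * v i0 ^ 2 / n → g t < 0 := by
    intro t ht htl
    have hSt : v i0 ^ 2 / t ≤ S t := by
      have := Finset.single_le_sum (f := fun i => v i ^ 2 / (c i + t))
        (fun i _ => div_nonneg (sq_nonneg _) (by have := hcnn i; linarith)) (Finset.mem_univ i0)
      simpa [hc0] using this
    have hv0 : 0 < v i0 ^ 2 := pow_two_pos_of_ne_zero (hv i0)
    have : (n : ℝ) / ε < v i0 ^ 2 / t := by
      rw [div_lt_div_iff₀ hε ht]
      rw [lt_div_iff₀ hn0] at htl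
      linarith
    simp only [hg]
    linarith
  -- positivity for large t
  set S0 : ℝ := ∑ i, v i ^ 2 with hS0
  have hS0pos : 0 < S0 := Finset.sum_pos (fun i _ => pow_two_pos_of_ne_zero (hv i)) ⟨i0, Finset.mem_univ i0⟩
  set T : ℝ := ε * S0 / n + 1 with hT
  have hTpos : 0 < T := by positivity
  have hpos : 0 < g T := by
    have hSle : S T ≤ S0 / T := by
      rw [hS0, Finset.sum_div]
      apply Finset.sum_le_sum
      intro i _
      apply div_le_div_of_nonneg_left (by positivity) hTpos
      have := hcnn i; linarith
    have : S0 / T < (n : ℝ) / ε := by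
      rw [div_lt_div_iff₀ hTpos hε]
      have : (n : ℝ) * T = ε * S0 + n := by rw [hT, mul_add, mul_one, mul_div_assoc', mul_comm (n:ℝ) (ε * S0), mul_div_assoc, div_self (ne_of_gt hn0), mul_one]
      nlinarith
    simp only [hg]
    linarith
  -- IVT
  set t0 : ℝ := ε * v i0 ^ 2 / (2 * n) with ht0
  have hv0sq : 0 < v i0 ^ 2 := pow_two_pos_of_ne_zero (hv i0)
  have ht0pos : 0 < t0 := by positivity
  have hv1S : v i0 ^ 2 ≤ S0 :=
    Finset.single_le_sum (f := fun i => v i ^ 2) (fun i _ => by positivity) (Finset.mem_univ i0)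
  have ht0T : t0 ≤ T := by
    rw [ht0, div_le_iff₀ (by positivity)]
    have : (n:ℝ) * T = ε * S0 + n := by rw [hT, mul_add, mul_one, mul_div_assoc', mul_comm (n:ℝ) (ε * S0), mul_div_assoc, div_self (ne_of_gt hn0), mul_one]
    nlinarith
  have hcont : ContinuousOn g (Set.Icc t0 T) := by
    apply ContinuousOn.sub continuousOn_const
    apply continuousOn_finset_sum
    intro i _
    apply ContinuousOn.div continuousOn_const
    · fun_prop
    · intro t ht
      have := hcnn i
      have := ht.1
      have : 0 < c i + t := by linarith
      exact ne_of_gt this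
  have hgt0neg : g t0 < 0 := by
    apply hneg t0 ht0pos
    rw [ht0]
    rw [div_lt_div_iff₀ (by positivity) hn0]
    nlinarith [mul_pos (mul_pos hε hv0sq) hn0]
  obtain ⟨t, htmem, hgt⟩ := intermediate_value_Icc ht0T hcont
    ⟨le_of_lt hgt0neg, le_of_lt hpos⟩
  have htpos : 0 < t := lt_of_lt_of_le ht0pos htmem.1
  -- uniqueness
  have huniq : ∀ t' : ℝ, 0 < t' → g t' = 0 → t' = t := by
    intro t' ht' hgt'
    exact hmono.injOn (Set.mem_Ioi.2 ht') (Set.mem_Ioi.2 htpos) (by rw [hgt', hgt])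
  -- lower bound
  have hlb : ε * v i0 ^ 2 / n ≤ t := by
    by_contra h
    push_neg at h
    exact absurd hgt (ne_of_lt (hneg t htpos h))
  -- secular equation in sum form
  have hSt : S t = (n : ℝ) / ε := by
    have := hgt
    simp only [hg] at this
    linarith
  have hden : ∀ i, 0 < c i + t := fun i => by have := hcnn i; linarith
  -- the matrix
  set M : Matrix (Fin n) (Fin n) ℝ := Matrix.diagonal d + (ε / n) • Matrix.vecMulVec v v
    with hM
  have hMsymm : Mᵀ = M := by
    rw [hM, Matrix.transpose_add, Matrix.transpose_smul, Matrix.diagonal_transpose]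
    congr 1
    ext i j
    simp [Matrix.transpose_apply, Matrix.vecMulVec_apply, mul_comm]
  have hA := symPart_isHermitian M
  have hAM : (2⁻¹ : ℝ) • (M + Mᵀ) = M := by
    rw [hMsymm, ← two_smul ℝ M, smul_smul]
    norm_num
  have hMherm : M.IsHermitian := by rw [← hAM]; exact hA
  -- mulVec computation
  have hmulvec : ∀ w : Fin n → ℝ, ∀ i, (M *ᵥ w) i
      = d i * w i + (ε / n) * (v i * (v ⬝ᵥ w)) := by
    intro w i
    rw [hM, Matrix.add_mulVec, Matrix.smul_mulVec]
    simp only [Pi.add_apply, Pi.smul_apply, Matrix.mulVec_diagonal, smul_eq_mul]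
    congr 1
    have : (Matrix.vecMulVec v v *ᵥ w) i = v i * (v ⬝ᵥ w) := by
      simp [Matrix.mulVec, Matrix.vecMulVec_apply, dotProduct, Finset.mul_sum,
        mul_assoc]
    rw [this]
  set μ : ℝ := d i0 + t with hμ
  -- eigenvector for μ
  set w0 : Fin n → ℝ := fun i => v i / (c i + t) with hw0
  have hvw0 : v ⬝ᵥ w0 = (n : ℝ) / ε := by
    rw [← hSt, hS]
    apply Finset.sum_congr rfl
    intro i _
    rw [hw0]
    field_simp
  have hMw : M *ᵥ w0 = μ • w0 := by
    funext i
    rw [hmulvec w0 i, hvw0]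
    have h1 : (ε / n) * (v i * ((n:ℝ) / ε)) = v i := by
      field_simp
    rw [h1]
    have h2 : (μ - d i) * w0 i = v i := by
      have : μ - d i = c i + t := by rw [hμ, hc]; ring
      rw [this, hw0]
      have hne := ne_of_gt (hden i)
      field_simp
    simp only [Pi.smul_apply, smul_eq_mul]
    linarith [h2]
  have hw0ne : w0 ≠ 0 := by
    intro h
    have := congrFun h i0
    simp only [hw0, Pi.zero_apply] at this
    rw [div_eq_zero_iff] at this
    rcases this with h' | h'
    · exact hv i0 h'
    · exact absurd h' (ne_of_gt (hden i0))
  -- μ is an eigenvalue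
  have hspec : spectrum ℝ M = Set.range (eigs M) := by
    have h0 : spectrum ℝ ((2⁻¹ : ℝ) • (M + Mᵀ)) = Set.range (eigs M) :=
      hA.spectrum_real_eq_range_eigenvalues
    rwa [hAM] at h0
  have hμspec : μ ∈ spectrum ℝ M := by
    rw [← Matrix.spectrum_toEuclideanLin (𝕜 := ℝ)]
    apply Module.End.HasEigenvalue.mem_spectrum
    apply Module.End.hasEigenvalue_of_hasEigenvector
      (x := (WithLp.equiv 2 (Fin n → ℝ)).symm w0)
    constructor
    · rw [Module.End.mem_eigenspace_iff]
      show WithLp.toLp 2 (M *ᵥ w0) = μ • WithLp.toLp 2 w0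
      rw [hMw, WithLp.toLp_smul]
    · intro h
      apply hw0ne
      apply (WithLp.equiv 2 (Fin n → ℝ)).symm.injective
      rw [h]
      simp
  rw [hspec] at hμspec
  obtain ⟨imax, himax⟩ := hμspec
  -- every eigenvalue is ≤ μ
  have hbound : ∀ i, eigs M i ≤ μ := by
    intro i
    set lam : ℝ := eigs M i with hlam
    set u : Fin n → ℝ := (WithLp.equiv 2 (Fin n → ℝ)) (hA.eigenvectorBasis i) with hu
    have hMu : M *ᵥ u = lam • u := by
      have h0 : ((2⁻¹ : ℝ) • (M + Mᵀ)) *ᵥ u = lam • u := hA.mulVec_eigenvectorBasis i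
      rwa [hAM] at h0
    have hune : u ≠ 0 := by
      intro h
      apply hA.eigenvectorBasis.orthonormal.ne_zero i
      apply (WithLp.equiv 2 (Fin n → ℝ)).injective
      rw [hu] at h
      simpa using h
    by_cases hle : lam ≤ d i0
    · rw [hμ]; linarith
    push_neg at hle
    set s : ℝ := lam - d i0 with hs
    have hspos : 0 < s := by rw [hs]; linarith
    have hdens : ∀ j, 0 < c j + s := fun j => by have := hcnn j; linarith
    have heig : ∀ j, (c j + s) * u j = (ε / n) * (v ⬝ᵥ u) * v j := by
      intro j
      have h1 := congrFun hMu j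
      rw [hmulvec u j] at h1
      simp only [Pi.smul_apply, smul_eq_mul] at h1
      have h2 : lam - d j = c j + s := by rw [hs, hc]; ring
      nlinarith [h1, h2]
    set α : ℝ := v ⬝ᵥ u with hα
    by_cases hα0 : α = 0
    · exfalso
      apply hune
      funext j
      have h1 := heig j
      rw [hα0] at h1
      simp only [Pi.zero_apply]
      have : (c j + s) * u j = 0 := by rw [h1]; ring
      exact (mul_eq_zero.1 this).resolve_left (ne_of_gt (hdens j)) 
    · -- α ≠ 0: secular equation at s
      have huj : ∀ j, u j = (ε / n) * α * v j / (c j + s) := by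
        intro j
        rw [eq_div_iff (ne_of_gt (hdens j))]
        linear_combination heig j
      have hαeq : α = (ε / n) * α * S s := by
        rw [hα]
        conv_lhs => rw [dotProduct]
        rw [hS, Finset.mul_sum]
        apply Finset.sum_congr rfl
        intro j _
        rw [huj j, ← hα]
        have := ne_of_gt (hdens j)
        field_simp
      have hSs : S s = (n : ℝ) / ε := by
        have hne : (ε / n) * α ≠ 0 := by
          apply mul_ne_zero _ hα0
          positivity
        have h2 : (ε / n) * α * S s = (ε / n) * α * ((n:ℝ)/ε) := by
          rw [← hαeq]
          field_simp
        exact mul_left_cancel₀ hne h2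
      have hgs : g s = 0 := by simp only [hg, hSs]; ring
      have := huniq s hspos hgs
      rw [hlam] at *
      rw [hμ]
      linarith [hs ▸ this]
  -- conclude lamMax
  have hlamMax : lamMax M = μ := by
    apply le_antisymm
    · exact ciSup_le hbound
    · rw [← himax]
      exact le_ciSup (Set.Finite.bddAbove (Set.finite_range _)) imax
  refine ⟨t, htpos, ?_, ?_, ?_, hlb⟩
  · rw [hexpr t, hgt]
  · intro t' ht' he
    rw [hexpr t'] at he
    exact huniq t' ht' he
  · exact hlamMax
end

section
/- Let X ∈ S_n, z_i ∼ N(0, I_n) i.i.d. for i = 1,...,k, let i_0 = argmax_i λ_max(X + (ε/n) z_i z_i^T) and let φ_{i_0} be a corresponding leading unit eigenvector. Then the matrix E[φ_{i_0} φ_{i_0}^T] is diagonalizable in the same orthonormal basis as X; in particular, if X is diagonal then E[φ_{i_0} φ_{i_0}^T] is diagonal. -/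
open MeasureTheory ProbabilityTheory Matrix
open scoped Classical

section LinAlg

variable {n : ℕ}

lemma herm_transpose_eq {A : Matrix (Fin n) (Fin n) ℝ} (hA : A.IsHermitian) : Aᵀ = A := by
  ext i j
  have h := congrFun (congrFun hA i) j
  simpa [Matrix.conjTranspose_apply] using h

lemma isHermitian_of_transpose_eq {A : Matrix (Fin n) (Fin n) ℝ} (h : Aᵀ = A) :
    A.IsHermitian := by
  unfold Matrix.IsHermitian
  ext i j
  simpa [Matrix.conjTranspose_apply] using congrFun (congrFun h i) j

lemma symPart_eq {A : Matrix (Fin n) (Fin n) ℝ} (hA : A.IsHermitian) :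
    (2⁻¹ : ℝ) • (A + Aᵀ) = A := by
  rw [herm_transpose_eq hA]; ext i j; simp [Matrix.smul_apply, Matrix.add_apply]; ring

lemma eigenvalues_congr {A B : Matrix (Fin n) (Fin n) ℝ} (h : A = B) (hA : A.IsHermitian)
    (hB : B.IsHermitian) : hA.eigenvalues = hB.eigenvalues := by subst h; rfl

lemma eigs_herm {A : Matrix (Fin n) (Fin n) ℝ} (hA : A.IsHermitian) :
    eigs A = hA.eigenvalues := eigenvalues_congr (symPart_eq hA) _ hA

lemma lamMax_herm {A : Matrix (Fin n) (Fin n) ℝ} (hA : A.IsHermitian) :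
    lamMax A = ⨆ i, hA.eigenvalues i := by
  unfold lamMax; rw [eigs_herm hA]

lemma eig_le_lamMax {A : Matrix (Fin n) (Fin n) ℝ} (hA : A.IsHermitian) (i : Fin n) :
    hA.eigenvalues i ≤ lamMax A := by
  rw [lamMax_herm hA]
  exact le_ciSup (Set.Finite.bddAbove (Set.finite_range _)) i

lemma exists_lamMax_index (hn : 0 < n) {A : Matrix (Fin n) (Fin n) ℝ} (hA : A.IsHermitian) :
    ∃ i, hA.eigenvalues i = lamMax A := by
  have : Nonempty (Fin n) := ⟨⟨0, hn⟩⟩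
  obtain ⟨i₀, hi₀⟩ := Finite.exists_max hA.eigenvalues
  refine ⟨i₀, le_antisymm (eig_le_lamMax hA i₀) ?_⟩
  rw [lamMax_herm hA]
  exact ciSup_le hi₀

/-- Orthonormal eigenbasis of a real symmetric matrix, with Parseval identities. -/
lemma herm_decomp (A : Matrix (Fin n) (Fin n) ℝ) (hA : A.IsHermitian) :
    ∃ u : Fin n → Fin n → ℝ,
      (∀ i j, u i ⬝ᵥ u j = if i = j then 1 else 0) ∧
      (∀ i, A *ᵥ u i = hA.eigenvalues i • u i) ∧
      (∀ v : Fin n → ℝ, ∀ t, v t = ∑ i, (u i ⬝ᵥ v) * u i t) ∧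
      (∀ v w : Fin n → ℝ, v ⬝ᵥ w = ∑ i, (u i ⬝ᵥ v) * (u i ⬝ᵥ w)) ∧
      (∀ v : Fin n → ℝ, v ⬝ᵥ A *ᵥ v = ∑ i, hA.eigenvalues i * (u i ⬝ᵥ v)^2) := by
  have hAT : Aᵀ = A := herm_transpose_eq hA
  set U : Matrix (Fin n) (Fin n) ℝ := (hA.eigenvectorUnitary : Matrix (Fin n) (Fin n) ℝ) with hU
  have hU1 : U * star U = 1 := (Matrix.mem_unitaryGroup_iff).mp hA.eigenvectorUnitary.2
  have hU2 : star U * U = 1 := (Matrix.mem_unitaryGroup_iff').mp hA.eigenvectorUnitary.2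
  set u : Fin n → Fin n → ℝ := fun j => fun i => U i j with hu
  have horm : ∀ i j, u i ⬝ᵥ u j = if i = j then 1 else 0 := by
    intro i j
    have h := congrFun (congrFun hU2 i) j
    simpa [Matrix.mul_apply, Matrix.star_apply, Matrix.one_apply, dotProduct, hu] using h
  have heig : ∀ i, A *ᵥ u i = hA.eigenvalues i • u i := by
    intro i
    have : u i = ⇑(hA.eigenvectorBasis i) := by
      funext t; exact hA.eigenvectorUnitary_apply t i
    rw [this]
    exact hA.mulVec_eigenvectorBasis i
  have hexp : ∀ v : Fin n → ℝ, ∀ t, v t = ∑ i, (u i ⬝ᵥ v) * u i t := by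
    intro v t
    have h1 : v t = ((U * star U) *ᵥ v) t := by rw [hU1, Matrix.one_mulVec]
    rw [h1]
    simp only [Matrix.mulVec, Matrix.mul_apply, dotProduct, Matrix.star_apply, star_trivial,
      Finset.sum_mul, hu]
    rw [Finset.sum_comm]
    exact Finset.sum_congr rfl fun i _ => Finset.sum_congr rfl fun s _ => by ring
  have hpar : ∀ v w : Fin n → ℝ, v ⬝ᵥ w = ∑ i, (u i ⬝ᵥ v) * (u i ⬝ᵥ w) := by
    intro v w
    calc v ⬝ᵥ w = ∑ t, v t * w t := rfl
      _ = ∑ t, (∑ i, (u i ⬝ᵥ v) * u i t) * w t :=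
          Finset.sum_congr rfl fun t _ => by rw [← hexp v t]
      _ = ∑ i, (u i ⬝ᵥ v) * (u i ⬝ᵥ w) := by
          simp only [Finset.sum_mul]
          rw [Finset.sum_comm]
          refine Finset.sum_congr rfl fun i _ => ?_
          simp only [dotProduct, Finset.mul_sum]
          exact Finset.sum_congr rfl fun t _ => by ring
  refine ⟨u, horm, heig, hexp, hpar, ?_⟩
  intro v
  rw [hpar v (A *ᵥ v)]
  refine Finset.sum_congr rfl fun i _ => ?_
  have : u i ⬝ᵥ A *ᵥ v = hA.eigenvalues i * (u i ⬝ᵥ v) := by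
    rw [Matrix.dotProduct_mulVec]
    have hvm : u i ᵥ* A = A *ᵥ u i := by
      conv_lhs => rw [show A = Aᵀ from hAT.symm]
      rw [Matrix.vecMul_transpose]
    rw [hvm, heig i, smul_dotProduct, smul_eq_mul]
  rw [this]; ring

lemma dot_self_nonneg (v : Fin n → ℝ) : 0 ≤ v ⬝ᵥ v :=
  Finset.sum_nonneg fun i _ => mul_self_nonneg (v i)

lemma dot_self_pos {v : Fin n → ℝ} (hv : v ≠ 0) : 0 < v ⬝ᵥ v := by
  rcases lt_or_eq_of_le (dot_self_nonneg v) with h | h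
  · exact h
  · exact absurd (dotProduct_self_eq_zero.mp h.symm) hv

lemma rayleigh_le {A : Matrix (Fin n) (Fin n) ℝ} (hA : A.IsHermitian) (v : Fin n → ℝ) :
    v ⬝ᵥ A *ᵥ v ≤ lamMax A * (v ⬝ᵥ v) := by
  obtain ⟨u, horm, heig, hexp, hpar, hquad⟩ := herm_decomp A hA
  rw [hquad v, hpar v v]
  calc ∑ i, hA.eigenvalues i * (u i ⬝ᵥ v)^2
      ≤ ∑ i, lamMax A * (u i ⬝ᵥ v)^2 :=
        Finset.sum_le_sum fun i _ =>
          mul_le_mul_of_nonneg_right (eig_le_lamMax hA i) (sq_nonneg _)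
    _ = lamMax A * ∑ i, (u i ⬝ᵥ v) * (u i ⬝ᵥ v) := by
        rw [Finset.mul_sum]; exact Finset.sum_congr rfl fun i _ => by ring

lemma eig_le_lamMax' {A : Matrix (Fin n) (Fin n) ℝ} (hA : A.IsHermitian) {v : Fin n → ℝ}
    {t : ℝ} (hv : A *ᵥ v = t • v) (hv0 : v ≠ 0) : t ≤ lamMax A := by
  have h := rayleigh_le hA v
  rw [hv, dotProduct_smul, smul_eq_mul] at h
  have hd := dot_self_pos hv0
  exact le_of_mul_le_mul_right (by linarith [h]) hd

lemma lamMax_attained (hn : 0 < n) {A : Matrix (Fin n) (Fin n) ℝ} (hA : A.IsHermitian) :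
    ∃ v : Fin n → ℝ, v ⬝ᵥ v = 1 ∧ A *ᵥ v = lamMax A • v := by
  obtain ⟨i, hi⟩ := exists_lamMax_index hn hA
  obtain ⟨u, horm, heig, -, -, -⟩ := herm_decomp A hA
  refine ⟨u i, by simpa using horm i i, ?_⟩
  rw [heig i, hi]

end LinAlg

section LinAlg2

variable {n : ℕ}

lemma vecMulVec_mulVec' (z v : Fin n → ℝ) :
    Matrix.vecMulVec z z *ᵥ v = (z ⬝ᵥ v) • z := by
  funext t
  simp only [Matrix.mulVec, dotProduct, Matrix.vecMulVec_apply, Pi.smul_apply, smul_eq_mul]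
  rw [Finset.sum_mul]
  exact Finset.sum_congr rfl fun s _ => by ring

lemma isHermitian_perturb {X : Matrix (Fin n) (Fin n) ℝ} (hX : X.IsHermitian)
    (c : ℝ) (z : Fin n → ℝ) : (X + c • Matrix.vecMulVec z z).IsHermitian := by
  apply isHermitian_of_transpose_eq
  have hXT := herm_transpose_eq hX
  ext i j
  simp only [Matrix.transpose_apply, Matrix.add_apply, Matrix.smul_apply,
    Matrix.vecMulVec_apply, smul_eq_mul]
  have hx : X j i = X i j := congrFun (congrFun hXT i) j
  rw [hx]; ring

lemma conj_transpose_eq {S B : Matrix (Fin n) (Fin n) ℝ} (hB : Bᵀ = B) :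
    (S * B * Sᵀ)ᵀ = S * B * Sᵀ := by
  simp [Matrix.transpose_mul, Matrix.transpose_transpose, hB, Matrix.mul_assoc]

lemma dot_conj {S : Matrix (Fin n) (Fin n) ℝ} (h1 : S * Sᵀ = 1) (v : Fin n → ℝ) :
    (Sᵀ *ᵥ v) ⬝ᵥ (Sᵀ *ᵥ v) = v ⬝ᵥ v := by
  rw [Matrix.dotProduct_mulVec, Matrix.vecMul_transpose, Matrix.mulVec_mulVec, h1,
    Matrix.one_mulVec]

lemma lamMax_conj_le (hn : 0 < n) {S B : Matrix (Fin n) (Fin n) ℝ}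
    (h1 : S * Sᵀ = 1) (h2 : Sᵀ * S = 1) (hB : Bᵀ = B) :
    lamMax (S * B * Sᵀ) ≤ lamMax B := by
  obtain ⟨v, hv1, hv⟩ := lamMax_attained hn (isHermitian_of_transpose_eq (conj_transpose_eq hB))
  have hw : B *ᵥ (Sᵀ *ᵥ v) = lamMax (S * B * Sᵀ) • (Sᵀ *ᵥ v) := by
    have h3 : Sᵀ *ᵥ ((S * B * Sᵀ) *ᵥ v) = lamMax (S * B * Sᵀ) • (Sᵀ *ᵥ v) := by
      rw [hv, Matrix.mulVec_smul]
    calc B *ᵥ (Sᵀ *ᵥ v) = (B * Sᵀ) *ᵥ v := by rw [Matrix.mulVec_mulVec]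
      _ = (Sᵀ * (S * B * Sᵀ)) *ᵥ v := by
          rw [← Matrix.mul_assoc, ← Matrix.mul_assoc, h2, Matrix.one_mul]
      _ = lamMax (S * B * Sᵀ) • (Sᵀ *ᵥ v) := by rw [← Matrix.mulVec_mulVec]; exact h3
  have hne : Sᵀ *ᵥ v ≠ 0 := by
    intro h
    have := dot_conj h1 v
    rw [h, hv1] at this
    simp at this
  exact eig_le_lamMax' (isHermitian_of_transpose_eq hB) hw hne

lemma lamMax_conj (hn : 0 < n) {S B : Matrix (Fin n) (Fin n) ℝ}
    (h1 : S * Sᵀ = 1) (h2 : Sᵀ * S = 1) (hB : Bᵀ = B) :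
    lamMax (S * B * Sᵀ) = lamMax B := by
  refine le_antisymm (lamMax_conj_le hn h1 h2 hB) ?_
  have hB' : B = Sᵀ * (S * B * Sᵀ) * Sᵀᵀ := by
    rw [Matrix.transpose_transpose, ← Matrix.mul_assoc, ← Matrix.mul_assoc, h2, Matrix.one_mul,
      Matrix.mul_assoc, h2, Matrix.mul_one]
  nth_rewrite 1 [hB']
  exact lamMax_conj_le hn (by rw [Matrix.transpose_transpose]; exact h2)
    (by rw [Matrix.transpose_transpose]; exact h1) (conj_transpose_eq hB)

/-- entrywise 1-norm -/
noncomputable def entrySum {n : ℕ} (C : Matrix (Fin n) (Fin n) ℝ) : ℝ := ∑ i, ∑ j, |C i j|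

lemma abs_le_one_of_unit {v : Fin n → ℝ} (hv : v ⬝ᵥ v = 1) (i : Fin n) : |v i| ≤ 1 := by
  rw [abs_le_one_iff_mul_self_le_one]
  calc v i * v i ≤ ∑ j, v j * v j :=
        Finset.single_le_sum (fun j _ => mul_self_nonneg (v j)) (Finset.mem_univ i)
    _ = 1 := hv

lemma lamMax_sub_le (hn : 0 < n) {A B : Matrix (Fin n) (Fin n) ℝ}
    (hA : Aᵀ = A) (hB : Bᵀ = B) : lamMax A ≤ lamMax B + entrySum (A - B) := by
  obtain ⟨v, hv1, hv⟩ := lamMax_attained hn (isHermitian_of_transpose_eq hA)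
  have h0 : lamMax A = v ⬝ᵥ A *ᵥ v := by
    rw [hv, dotProduct_smul, smul_eq_mul, hv1, mul_one]
  have hsplit : v ⬝ᵥ A *ᵥ v = v ⬝ᵥ B *ᵥ v + v ⬝ᵥ (A - B) *ᵥ v := by
    rw [← dotProduct_add, ← Matrix.add_mulVec, show B + (A - B) = A from by abel]
  have h1 : v ⬝ᵥ B *ᵥ v ≤ lamMax B := by
    have := rayleigh_le (isHermitian_of_transpose_eq hB) v
    rwa [hv1, mul_one] at this
  have h2 : v ⬝ᵥ (A - B) *ᵥ v ≤ entrySum (A - B) := by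
    set C := A - B
    calc v ⬝ᵥ C *ᵥ v = ∑ i, ∑ j, v i * (C i j * v j) := by
          simp only [dotProduct, Matrix.mulVec, Finset.mul_sum]
      _ ≤ ∑ i, ∑ j, |C i j| := by
          refine Finset.sum_le_sum fun i _ => Finset.sum_le_sum fun j _ => ?_
          calc v i * (C i j * v j) ≤ |v i * (C i j * v j)| := le_abs_self _
            _ = |v i| * |C i j| * |v j| := by rw [abs_mul, abs_mul, mul_assoc]
            _ ≤ 1 * |C i j| * 1 := by
                have hvi := abs_le_one_of_unit hv1 i
                have hvj := abs_le_one_of_unit hv1 j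
                gcongr
            _ = |C i j| := by ring
      _ = entrySum C := rfl
  linarith [h0, hsplit, h1, h2]

lemma entrySum_comm (A B : Matrix (Fin n) (Fin n) ℝ) : entrySum (A - B) = entrySum (B - A) := by
  unfold entrySum
  refine Finset.sum_congr rfl fun i _ => Finset.sum_congr rfl fun j _ => ?_
  simp [Matrix.sub_apply, abs_sub_comm]

lemma abs_lamMax_sub_le (hn : 0 < n) {A B : Matrix (Fin n) (Fin n) ℝ}
    (hA : Aᵀ = A) (hB : Bᵀ = B) : |lamMax A - lamMax B| ≤ entrySum (A - B) := by
  rw [abs_sub_le_iff]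
  constructor
  · linarith [lamMax_sub_le hn hA hB]
  · rw [entrySum_comm]
    linarith [lamMax_sub_le hn hB hA]

lemma continuous_lamMax_comp {α : Type*} [TopologicalSpace α] (hn : 0 < n)
    {g : α → Matrix (Fin n) (Fin n) ℝ} (hg : ∀ i j, Continuous fun a => g a i j)
    (hsym : ∀ a, (g a)ᵀ = g a) : Continuous fun a => lamMax (g a) := by
  rw [continuous_iff_continuousAt]
  intro a₀
  have hb : Continuous fun a => entrySum (g a - g a₀) := by
    apply continuous_finset_sum
    intro i _
    apply continuous_finset_sum
    intro j _
    exact ((hg i j).sub continuous_const).abs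
  have hb0 : Filter.Tendsto (fun a => entrySum (g a - g a₀)) (nhds a₀) (nhds 0) := by
    have h00 : entrySum (g a₀ - g a₀) = 0 := by simp [entrySum, Matrix.sub_apply]
    have h01 := hb.tendsto a₀
    rwa [h00] at h01
  rw [ContinuousAt, tendsto_iff_dist_tendsto_zero]
  exact squeeze_zero (fun a => dist_nonneg)
    (fun a => by rw [Real.dist_eq]; exact abs_lamMax_sub_le hn (hsym a) (hsym a₀)) hb0

end LinAlg2

section Perturb

variable {n : ℕ}

lemma perturb_coord {A : Matrix (Fin n) (Fin n) ℝ} (hAT : Aᵀ = A)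
    {u : Fin n → Fin n → ℝ} {lam : Fin n → ℝ}
    (heig : ∀ i, A *ᵥ u i = lam i • u i) {c t : ℝ} {z v : Fin n → ℝ}
    (hv : (A + c • Matrix.vecMulVec z z) *ᵥ v = t • v) (i : Fin n) :
    (t - lam i) * (u i ⬝ᵥ v) = (c * (z ⬝ᵥ v)) * (u i ⬝ᵥ z) := by
  have h := congrArg (fun w => u i ⬝ᵥ w) hv
  rw [Matrix.add_mulVec, Matrix.smul_mulVec, vecMulVec_mulVec' z v,
    dotProduct_add] at h
  have hsym : u i ⬝ᵥ A *ᵥ v = lam i * (u i ⬝ᵥ v) := by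
    rw [Matrix.dotProduct_mulVec]
    have hvm : u i ᵥ* A = A *ᵥ u i := by
      conv_lhs => rw [show A = Aᵀ from hAT.symm]
      rw [Matrix.vecMul_transpose]
    rw [hvm, heig i, smul_dotProduct, smul_eq_mul]
  rw [hsym] at h
  simp only [dotProduct_smul, smul_eq_mul] at h
  linear_combination -h

lemma perturb_gamma_ne {A : Matrix (Fin n) (Fin n) ℝ} (hA : A.IsHermitian)
    {c t : ℝ} {z v : Fin n → ℝ} (ht : lamMax A < t)
    (hv : (A + c • Matrix.vecMulVec z z) *ᵥ v = t • v) (hv0 : v ≠ 0) :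
    z ⬝ᵥ v ≠ 0 := by
  obtain ⟨u, horm, heig, hexp, hpar, hquad⟩ := herm_decomp A hA
  intro hγ
  apply hv0
  have hcoord : ∀ i, u i ⬝ᵥ v = 0 := by
    intro i
    have h1 := perturb_coord (herm_transpose_eq hA) heig hv i
    rw [hγ] at h1
    have hne : t - hA.eigenvalues i ≠ 0 := by
      have := eig_le_lamMax hA i; intro h; apply absurd ht; linarith
    have : (t - hA.eigenvalues i) * (u i ⬝ᵥ v) = 0 := by linarith [h1]
    exact (mul_eq_zero.mp this).resolve_left hne
  funext r
  rw [hexp v r]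
  simp [hcoord]

lemma perturb_sign {A : Matrix (Fin n) (Fin n) ℝ} (hA : A.IsHermitian)
    {c t : ℝ} {z v w : Fin n → ℝ} (ht : lamMax A < t)
    (hv : (A + c • Matrix.vecMulVec z z) *ᵥ v = t • v)
    (hw : (A + c • Matrix.vecMulVec z z) *ᵥ w = t • w)
    (hv1 : v ⬝ᵥ v = 1) (hw1 : w ⬝ᵥ w = 1) : v = w ∨ v = -w := by
  obtain ⟨u, horm, heig, hexp, hpar, hquad⟩ := herm_decomp A hA
  have hAT := herm_transpose_eq hA
  have hlt : ∀ i, t - hA.eigenvalues i ≠ 0 := fun i => by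
    have := eig_le_lamMax hA i; intro h; apply absurd ht; linarith
  have hv0 : v ≠ 0 := by intro h; rw [h] at hv1; simp at hv1
  have hw0 : w ≠ 0 := by intro h; rw [h] at hw1; simp at hw1
  have hγv : z ⬝ᵥ v ≠ 0 := perturb_gamma_ne hA ht hv hv0
  have hγw : z ⬝ᵥ w ≠ 0 := perturb_gamma_ne hA ht hw hw0
  set s : ℝ := (z ⬝ᵥ v) / (z ⬝ᵥ w) with hs
  have hcoord : ∀ i, u i ⬝ᵥ v = s * (u i ⬝ᵥ w) := by
    intro i
    have h1 := perturb_coord hAT heig hv i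
    have h2 := perturb_coord hAT heig hw i
    have key : (t - hA.eigenvalues i) * ((z ⬝ᵥ w) * (u i ⬝ᵥ v)) =
        (t - hA.eigenvalues i) * ((z ⬝ᵥ v) * (u i ⬝ᵥ w)) := by
      linear_combination (z ⬝ᵥ w) * h1 - (z ⬝ᵥ v) * h2
    have key2 : (z ⬝ᵥ w) * (u i ⬝ᵥ v) = (z ⬝ᵥ v) * (u i ⬝ᵥ w) :=
      mul_left_cancel₀ (hlt i) key
    rw [hs]
    field_simp
    linear_combination key2
  have hvw : v = s • w := by
    funext r
    rw [show (s • w) r = s * w r from rfl, hexp v r, hexp w r, Finset.mul_sum]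
    exact Finset.sum_congr rfl fun i _ => by rw [hcoord i]; ring
  have hss : s * s = 1 := by
    have h1 := hv1
    rw [hvw, smul_dotProduct, dotProduct_smul, hw1] at h1
    simpa [smul_eq_mul] using h1
  have : (s - 1) * (s + 1) = 0 := by linear_combination hss
  rcases mul_eq_zero.mp this with h | h
  · left; rw [hvw, show s = 1 by linarith, one_smul]
  · right; rw [hvw, show s = -1 by linarith]
    simp

lemma perturb_q {A : Matrix (Fin n) (Fin n) ℝ} (hA : A.IsHermitian)
    {u : Fin n → Fin n → ℝ}
    (heig : ∀ i, A *ᵥ u i = hA.eigenvalues i • u i)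
    (hpar : ∀ v w : Fin n → ℝ, v ⬝ᵥ w = ∑ i, (u i ⬝ᵥ v) * (u i ⬝ᵥ w))
    {c t : ℝ} {z v : Fin n → ℝ} (ht : lamMax A < t)
    (hv : (A + c • Matrix.vecMulVec z z) *ᵥ v = t • v) (hv0 : v ≠ 0) :
    ∑ i, (c / (t - hA.eigenvalues i)) * (u i ⬝ᵥ z)^2 = 1 := by
  have hAT := herm_transpose_eq hA
  have hlt : ∀ i, t - hA.eigenvalues i ≠ 0 := fun i => by
    have := eig_le_lamMax hA i; intro h; apply absurd ht; linarith
  have hγ : z ⬝ᵥ v ≠ 0 := perturb_gamma_ne hA ht hv hv0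
  apply mul_left_cancel₀ hγ
  rw [mul_one, Finset.mul_sum]
  calc ∑ i, (z ⬝ᵥ v) * ((c / (t - hA.eigenvalues i)) * (u i ⬝ᵥ z)^2)
      = ∑ i, (u i ⬝ᵥ z) * (u i ⬝ᵥ v) := by
        refine Finset.sum_congr rfl fun i _ => ?_
        have h1 := perturb_coord hAT heig hv i
        have hdiv : c / (t - hA.eigenvalues i) * (t - hA.eigenvalues i) = c :=
          div_mul_cancel₀ c (hlt i)
        refine mul_left_cancel₀ (hlt i) ?_
        linear_combination ((z ⬝ᵥ v) * (u i ⬝ᵥ z)^2) * hdiv - (u i ⬝ᵥ z) * h1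
    _ = z ⬝ᵥ v := (hpar z v).symm

lemma quad_eval (u : Fin n → Fin n → ℝ) (dcoef : Fin n → ℝ) (x : Fin n → ℝ) :
    x ⬝ᵥ (Matrix.of fun p q => ∑ i, dcoef i * (u i p * u i q)) *ᵥ x
      = ∑ i, dcoef i * (u i ⬝ᵥ x)^2 := by
  have hmv : ∀ p, ((Matrix.of fun p q => ∑ i, dcoef i * (u i p * u i q)) *ᵥ x) p
      = ∑ i, dcoef i * (u i ⬝ᵥ x) * u i p := by
    intro p
    simp only [Matrix.mulVec, dotProduct, Matrix.of_apply, Finset.sum_mul]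
    rw [Finset.sum_comm]
    refine Finset.sum_congr rfl fun i _ => ?_
    simp only [dotProduct, Finset.mul_sum, Finset.sum_mul]
    exact Finset.sum_congr rfl fun q _ => by ring
  calc x ⬝ᵥ (Matrix.of fun p q => ∑ i, dcoef i * (u i p * u i q)) *ᵥ x
      = ∑ p, x p * ∑ i, dcoef i * (u i ⬝ᵥ x) * u i p := by
        refine Finset.sum_congr rfl fun p _ => ?_
        rw [hmv p]
    _ = ∑ i, dcoef i * (u i ⬝ᵥ x)^2 := by
        simp only [Finset.mul_sum]
        rw [Finset.sum_comm]
        refine Finset.sum_congr rfl fun i _ => ?_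
        rw [sq]
        simp only [dotProduct, Finset.mul_sum, Finset.sum_mul]
        refine Finset.sum_congr rfl fun p _ => ?_
        exact Finset.sum_congr rfl fun q _ => by ring
end Perturb

section GaussMeasure

open scoped ENNReal NNReal

variable {n : ℕ}

lemma lintegral_fin_prod : ∀ (m : ℕ) (μ : Measure ℝ), SigmaFinite μ → ∀ (g : Fin m → ℝ → ℝ≥0∞),
    (∀ i, Measurable (g i)) →
    ∫⁻ x : Fin m → ℝ, ∏ i, g i (x i) ∂(Measure.pi fun _ => μ) = ∏ i, ∫⁻ s, g i s ∂μ := by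
  intro m
  induction m with
  | zero =>
      intro μ hsf g hg
      haveI := hsf
      simp [MeasureTheory.Measure.pi_univ]
  | succ m ih =>
      intro μ hsf g hg
      haveI := hsf
      have hmp := measurePreserving_piFinSuccAbove (fun _ : Fin (m + 1) => μ) 0
      set e := MeasurableEquiv.piFinSuccAbove (fun _ : Fin (m + 1) => ℝ) 0 with he
      set G : ℝ × (Fin m → ℝ) → ℝ≥0∞ := fun p => g 0 p.1 * ∏ j, g (Fin.succ j) (p.2 j) with hGdef
      have hmeas : Measurable G :=
        ((hg 0).comp measurable_fst).mul
          (Finset.measurable_prod _ fun j _ =>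
            (hg _).comp ((measurable_pi_apply j).comp measurable_snd))
      have hpt : ∀ x : Fin (m + 1) → ℝ, ∏ i, g i (x i) = G (e x) := by
        intro x
        rw [Fin.prod_univ_succ]
        have h2 : ∀ j, (e x).2 j = x (Fin.succ j) := by
          intro j
          show x ((0 : Fin (m + 1)).succAbove j) = x (Fin.succ j)
          rw [Fin.succAbove_zero]
        show g 0 (x 0) * ∏ j, g (Fin.succ j) (x (Fin.succ j))
            = g 0 (e x).1 * ∏ j, g (Fin.succ j) ((e x).2 j)
        have h1 : (e x).1 = x 0 := rfl
        rw [h1]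
        exact congrArg (fun z => g 0 (x 0) * z)
          (Finset.prod_congr rfl fun j _ => (h2 j).symm ▸ rfl)
      calc ∫⁻ x : Fin (m + 1) → ℝ, ∏ i, g i (x i) ∂(Measure.pi fun _ => μ)
          = ∫⁻ x, G (e x) ∂(Measure.pi fun _ => μ) := by
            exact lintegral_congr fun x => hpt x
        _ = ∫⁻ p, G p ∂(μ.prod (Measure.pi fun _ : Fin m => μ)) := by
            rw [← hmp.map_eq, lintegral_map hmeas e.measurable]
        _ = (∫⁻ s, g 0 s ∂μ) * ∫⁻ r : Fin m → ℝ, ∏ j, g (Fin.succ j) (r j)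
              ∂(Measure.pi fun _ => μ) :=
            lintegral_prod_mul (hg 0).aemeasurable
              (Finset.measurable_prod _ fun j _ =>
                (hg _).comp (measurable_pi_apply j)).aemeasurable
        _ = ∏ i, ∫⁻ s, g i s ∂μ := by
            rw [ih μ hsf _ fun j => hg (Fin.succ j), Fin.prod_univ_succ]

lemma setLintegral_pi_prod (μ : Measure ℝ) [SigmaFinite μ] (g : Fin n → ℝ → ℝ≥0∞)
    (hg : ∀ i, Measurable (g i)) (s : Fin n → Set ℝ) (hs : ∀ i, MeasurableSet (s i)) :
    ∫⁻ x in Set.pi Set.univ s, ∏ i, g i (x i) ∂(Measure.pi fun _ => μ)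
      = ∏ i, ∫⁻ t in s i, g i t ∂μ := by
  rw [← lintegral_indicator (MeasurableSet.univ_pi hs)]
  have hind : (Set.pi Set.univ s).indicator (fun x => ∏ i, g i (x i))
      = fun x => ∏ i, (s i).indicator (g i) (x i) := by
    funext x
    by_cases hx : x ∈ Set.pi Set.univ s
    · rw [Set.indicator_of_mem hx]
      exact Finset.prod_congr rfl fun i _ =>
        (Set.indicator_of_mem (hx i (Set.mem_univ i)) _).symm
    · rw [Set.indicator_of_notMem hx]
      have : ∃ i, x i ∉ s i := by simpa [Set.mem_pi] using hx
      obtain ⟨i, hi⟩ := this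
      symm
      apply Finset.prod_eq_zero (Finset.mem_univ i)
      exact Set.indicator_of_notMem hi _
  rw [hind, lintegral_fin_prod n μ ‹_› _ fun i => (hg i).indicator (hs i)]
  exact Finset.prod_congr rfl fun i _ => lintegral_indicator (hs i) _

lemma stdGaussian_eq_withDensity :
    stdGaussian n = volume.withDensity fun x => ∏ i, gaussianPDF 0 1 (x i) := by
  unfold _root_.stdGaussian
  refine Measure.pi_eq fun s hs => ?_
  rw [withDensity_apply _ (MeasurableSet.univ_pi hs), volume_pi,
    setLintegral_pi_prod volume (fun _ => gaussianPDF 0 1) (fun i => (measurable_gaussianPDFReal 0 1).ennreal_ofReal) s hs]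
  refine Finset.prod_congr rfl fun i _ => ?_
  rw [gaussianReal_of_var_ne_zero 0 one_ne_zero, withDensity_apply _ (hs i)]

end GaussMeasure

section Rotation

open scoped ENNReal NNReal

variable {n : ℕ}

lemma measurable_mulVec (S : Matrix (Fin n) (Fin n) ℝ) :
    Measurable fun x : Fin n → ℝ => S *ᵥ x := by
  rw [measurable_pi_iff]
  intro i
  show Measurable fun x : Fin n → ℝ => ∑ j, S i j * x j
  exact Finset.measurable_sum _ fun j _ => (measurable_pi_apply j).const_mul _

noncomputable def mulVecEquiv (S : Matrix (Fin n) (Fin n) ℝ) (h1 : S * Sᵀ = 1)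
    (h2 : Sᵀ * S = 1) : (Fin n → ℝ) ≃ᵐ (Fin n → ℝ) where
  toEquiv :=
    { toFun := fun x => S *ᵥ x
      invFun := fun x => Sᵀ *ᵥ x
      left_inv := fun x => by
        show Sᵀ *ᵥ (S *ᵥ x) = x
        rw [Matrix.mulVec_mulVec, h2, Matrix.one_mulVec]
      right_inv := fun x => by
        show S *ᵥ (Sᵀ *ᵥ x) = x
        rw [Matrix.mulVec_mulVec, h1, Matrix.one_mulVec] }
  measurable_toFun := measurable_mulVec S
  measurable_invFun := measurable_mulVec Sᵀ

lemma map_withDensity_equiv {α β : Type*} [MeasurableSpace α] [MeasurableSpace β]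
    (e : α ≃ᵐ β) (μ : Measure α) {f : α → ℝ≥0∞} (hf : Measurable f) :
    Measure.map e (μ.withDensity f) = (Measure.map e μ).withDensity fun y => f (e.symm y) := by
  ext s hs
  rw [Measure.map_apply e.measurable hs]
  calc (μ.withDensity f) (e ⁻¹' s)
      = ∫⁻ a in e ⁻¹' s, f a ∂μ := withDensity_apply _ (e.measurable hs)
    _ = ∫⁻ a in e ⁻¹' s, (fun y => f (e.symm y)) (e a) ∂μ := by
        refine lintegral_congr fun a => ?_
        simp
    _ = ∫⁻ y in s, (fun y => f (e.symm y)) y ∂(Measure.map e μ) :=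
        (setLIntegral_map hs (hf.comp e.symm.measurable) e.measurable).symm
    _ = ((Measure.map e μ).withDensity fun y => f (e.symm y)) s :=
        (withDensity_apply _ hs).symm

lemma map_mulVec_volume (S : Matrix (Fin n) (Fin n) ℝ) (h1 : S * Sᵀ = 1) :
    Measure.map (fun x : Fin n → ℝ => S *ᵥ x) volume = volume := by
  have hdet2 : S.det * S.det = 1 := by
    have h := congrArg Matrix.det h1
    rwa [Matrix.det_mul, Matrix.det_transpose, Matrix.det_one] at h
  have hdet : S.det = 1 ∨ S.det = -1 := mul_self_eq_one_iff.mp hdet2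
  have hd0 : S.det ≠ 0 := by rcases hdet with h | h <;> rw [h] <;> norm_num
  have hmap := Real.map_matrix_volume_pi_eq_smul_volume_pi hd0
  have habs : |S.det⁻¹| = 1 := by rcases hdet with h | h <;> rw [h] <;> norm_num
  rw [show ⇑(Matrix.toLin' S) = fun x => S *ᵥ x from funext fun x => Matrix.toLin'_apply S x]
    at hmap
  rw [hmap, habs, ENNReal.ofReal_one, one_smul]

lemma gaussianPDFReal_eq (s : ℝ) :
    gaussianPDFReal 0 1 s = (Real.sqrt (2 * Real.pi))⁻¹ * Real.exp (-(s ^ 2) / 2) := by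
  rw [gaussianPDFReal_def]
  norm_num

lemma prod_gaussianPDF_eq {x y : Fin n → ℝ} (h : y ⬝ᵥ y = x ⬝ᵥ x) :
    ∏ i, gaussianPDF 0 1 (y i) = ∏ i, gaussianPDF 0 1 (x i) := by
  have key : ∀ z : Fin n → ℝ, ∏ i, gaussianPDF 0 1 (z i)
      = ENNReal.ofReal ((Real.sqrt (2 * Real.pi))⁻¹ ^ n * Real.exp (-(z ⬝ᵥ z) / 2)) := by
    intro z
    unfold gaussianPDF
    rw [← ENNReal.ofReal_prod_of_nonneg fun i _ => gaussianPDFReal_nonneg 0 1 (z i)]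
    congr 1
    have : ∀ i : Fin n, gaussianPDFReal 0 1 (z i)
        = (Real.sqrt (2 * Real.pi))⁻¹ * Real.exp (-(z i ^ 2) / 2) :=
      fun i => gaussianPDFReal_eq (z i)
    rw [Finset.prod_congr rfl fun i _ => this i, Finset.prod_mul_distrib,
      Finset.prod_const, ← Real.exp_sum]
    congr 2
    · simp
    · rw [← Finset.sum_div]
      simp only [dotProduct]
      have hneg : (∑ i, -(z i ^ 2)) = -(∑ i, z i * z i) := by
        rw [← Finset.sum_neg_distrib]
        exact Finset.sum_congr rfl fun i _ => by ring
      rw [show (∑ i, -z i ^ 2) = ∑ i, -(z i ^ 2) from rfl, hneg, neg_div]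
  rw [key y, key x, h]

lemma measurePreserving_mulVec_stdGaussian (S : Matrix (Fin n) (Fin n) ℝ)
    (h1 : S * Sᵀ = 1) (h2 : Sᵀ * S = 1) :
    MeasurePreserving (fun x : Fin n → ℝ => S *ᵥ x) (stdGaussian n) (stdGaussian n) := by
  refine ⟨measurable_mulVec S, ?_⟩
  have hf : Measurable fun x : Fin n → ℝ => ∏ i, gaussianPDF 0 1 (x i) :=
    Finset.measurable_prod _ fun i _ =>
      ((measurable_gaussianPDFReal 0 1).comp (measurable_pi_apply i)).ennreal_ofReal
  have hcoe : (fun x : Fin n → ℝ => S *ᵥ x) = ⇑(mulVecEquiv S h1 h2) := rfl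
  rw [hcoe, stdGaussian_eq_withDensity, map_withDensity_equiv _ _ hf]
  have hvol : Measure.map (⇑(mulVecEquiv S h1 h2)) volume = volume := by
    rw [← hcoe]; exact map_mulVec_volume S h1
  rw [hvol]
  congr 1
  funext y
  exact prod_gaussianPDF_eq (dot_conj h1 y)

lemma gaussianReal_finite_null {s : Set ℝ} (hs : s.Finite) : gaussianReal 0 1 s = 0 := by
  rw [gaussianReal_of_var_ne_zero 0 one_ne_zero]
  exact withDensity_absolutelyContinuous volume _ (hs.measure_zero volume)

lemma stdGaussian_ac : stdGaussian n ≪ (volume : Measure (Fin n → ℝ)) := by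
  rw [stdGaussian_eq_withDensity]
  exact withDensity_absolutelyContinuous _ _

lemma stdGaussian_null_hyperplane {w : Fin n → ℝ} (hw : w ≠ 0) :
    stdGaussian n {x | x ⬝ᵥ w = 0} = 0 := by
  apply stdGaussian_ac
  set ℓ : (Fin n → ℝ) →ₗ[ℝ] ℝ :=
    { toFun := fun x => x ⬝ᵥ w
      map_add' := fun a b => add_dotProduct a b w
      map_smul' := fun c a => by simp [smul_dotProduct] } with hℓ
  have hset : {x : Fin n → ℝ | x ⬝ᵥ w = 0} = (LinearMap.ker ℓ : Set (Fin n → ℝ)) := by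
    ext x
    simp [LinearMap.mem_ker, hℓ]
  have hker : LinearMap.ker ℓ ≠ ⊤ := by
    intro h
    have h2 : ℓ = 0 := LinearMap.ker_eq_top.mp h
    have h3 : ℓ w = 0 := by rw [h2]; rfl
    have h4 : (0 : ℝ) < w ⬝ᵥ w := dot_self_pos hw
    rw [show ℓ w = w ⬝ᵥ w from rfl] at h3
    linarith
  rw [hset]
  exact Measure.addHaar_submodule volume _ hker

lemma quadratic_root_finite {a b d : ℝ} (ha : a ≠ 0) :
    {s : ℝ | a * s ^ 2 + b * s + d = 0}.Finite := by
  have hp : (Polynomial.C a * Polynomial.X ^ 2 + Polynomial.C b * Polynomial.X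
      + Polynomial.C d) ≠ 0 := by
    intro h
    have h2 := congrArg (fun p => Polynomial.coeff p 2) h
    simp [Polynomial.coeff_add, Polynomial.coeff_C_mul, Polynomial.coeff_C] at h2
    exact ha h2
  refine Set.Finite.subset (Polynomial.finite_setOf_isRoot hp) ?_
  intro s hs
  simp only [Set.mem_setOf_eq] at hs ⊢
  show Polynomial.IsRoot _ s
  simp [Polynomial.IsRoot, Polynomial.eval_add, Polynomial.eval_mul, Polynomial.eval_pow]
  linarith

lemma stdGaussian_null_of_slices (m : ℕ) {W : Set (Fin (m + 1) → ℝ)} (hW : MeasurableSet W)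
    (hfin : ∀ r : Fin m → ℝ, {s : ℝ | Fin.cons s r ∈ W}.Finite) :
    stdGaussian (m + 1) W = 0 := by
  have hmp := measurePreserving_piFinSuccAbove (fun _ : Fin (m + 1) => gaussianReal 0 1) 0
  set e := MeasurableEquiv.piFinSuccAbove (fun _ : Fin (m + 1) => ℝ) 0 with he
  have hW' : MeasurableSet (e.symm ⁻¹' W) := e.symm.measurable hW
  have h0 : stdGaussian (m + 1) W
      = ((gaussianReal 0 1).prod (Measure.pi fun _ : Fin m => gaussianReal 0 1))
        (e.symm ⁻¹' W) := by
    rw [show stdGaussian (m+1) = Measure.pi fun _ : Fin (m+1) => gaussianReal 0 1 from rfl,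
      ← hmp.map_eq, Measure.map_apply e.measurable hW']
    congr 1
    ext x
    simp
  rw [h0, Measure.prod_apply_symm hW']
  have hz : ∀ r : Fin m → ℝ, gaussianReal 0 1 ((fun s => (s, r)) ⁻¹' (e.symm ⁻¹' W)) = 0 := by
    intro r
    have hss : ((fun s => (s, r)) ⁻¹' (e.symm ⁻¹' W)) = {s : ℝ | Fin.cons s r ∈ W} := by
      ext s
      simp only [Set.mem_preimage, Set.mem_setOf_eq]
      have he2 : e.symm (s, r) = Fin.cons s r := Fin.insertNth_zero' s r
      rw [he2]
    rw [hss]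
    exact gaussianReal_finite_null (hfin r)
  rw [lintegral_congr hz, lintegral_zero]

end Rotation

section Null

open scoped ENNReal

variable {n : ℕ}

lemma measurable_quadform (Q : Matrix (Fin n) (Fin n) ℝ) :
    Measurable fun x : Fin n → ℝ => x ⬝ᵥ Q *ᵥ x := by
  show Measurable fun x : Fin n → ℝ => ∑ i, x i * ∑ j, Q i j * x j
  exact Finset.measurable_sum _ fun i _ =>
    (measurable_pi_apply i).mul
      (Finset.measurable_sum _ fun j _ => (measurable_pi_apply j).const_mul _)

lemma quadform_expand (Q : Matrix (Fin n) (Fin n) ℝ) (x : Fin n → ℝ) :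
    x ⬝ᵥ Q *ᵥ x = ∑ i, ∑ j, x i * Q i j * x j := by
  simp only [dotProduct, Matrix.mulVec, Finset.mul_sum]
  exact Finset.sum_congr rfl fun i _ => Finset.sum_congr rfl fun j _ => by ring

lemma cons_quadform {m : ℕ} (Q : Matrix (Fin (m + 1)) (Fin (m + 1)) ℝ) (r : Fin m → ℝ)
    (s : ℝ) :
    (Fin.cons s r : Fin (m + 1) → ℝ) ⬝ᵥ Q *ᵥ (Fin.cons s r)
      = Q 0 0 * s ^ 2
        + ((∑ j, Q 0 (Fin.succ j) * r j) + ∑ i, Q (Fin.succ i) 0 * r i) * s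
        + ∑ i, ∑ j, r i * Q (Fin.succ i) (Fin.succ j) * r j := by
  rw [quadform_expand]
  simp only [Fin.sum_univ_succ, Fin.cons_zero, Fin.cons_succ]
  rw [Finset.sum_add_distrib]
  have e1 : ∑ j, s * Q 0 (Fin.succ j) * r j = s * ∑ j, Q 0 (Fin.succ j) * r j := by
    rw [Finset.mul_sum]; exact Finset.sum_congr rfl fun j _ => by ring
  have e2 : ∑ i, r i * Q (Fin.succ i) 0 * s = (∑ i, Q (Fin.succ i) 0 * r i) * s := by
    rw [Finset.sum_mul]; exact Finset.sum_congr rfl fun i _ => by ring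
  rw [e1, e2]
  ring

lemma stdGaussian_null_quadric (hn : 0 < n) (Q : Matrix (Fin n) (Fin n) ℝ)
    (hpos : ∀ x : Fin n → ℝ, x ≠ 0 → 0 < x ⬝ᵥ Q *ᵥ x) :
    stdGaussian n {x | x ⬝ᵥ Q *ᵥ x = 1} = 0 := by
  obtain ⟨m, rfl⟩ : ∃ m, n = m + 1 := ⟨n - 1, (Nat.succ_pred_eq_of_pos hn).symm⟩
  apply stdGaussian_null_of_slices
  · exact measurable_quadform Q (measurableSet_singleton 1)
  · intro r
    have hQ00 : 0 < Q 0 0 := by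
      have hx0 : (Fin.cons 1 (0 : Fin m → ℝ) : Fin (m + 1) → ℝ) ≠ 0 := by
        intro h
        have h2 := congrFun h 0
        simp at h2
      have h := hpos _ hx0
      rw [cons_quadform] at h
      simpa using h
    refine Set.Finite.subset
      (quadratic_root_finite (a := Q 0 0)
        (b := (∑ j, Q 0 (Fin.succ j) * r j) + ∑ i, Q (Fin.succ i) 0 * r i)
        (d := (∑ i, ∑ j, r i * Q (Fin.succ i) (Fin.succ j) * r j) - 1)
        (ne_of_gt hQ00)) ?_
    intro s hs
    simp only [Set.mem_setOf_eq] at hs ⊢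
    rw [cons_quadform] at hs
    linarith

lemma pi_map_pair {k : ℕ} {m m' : Fin k} (h : m ≠ m') :
    Measure.map (fun z : Fin k → Fin n → ℝ => (z m, z m'))
      (Measure.pi fun _ => stdGaussian n) = (stdGaussian n).prod (stdGaussian n) := by
  have hmeas : Measurable fun z : Fin k → Fin n → ℝ => (z m, z m') :=
    (measurable_pi_apply m).prodMk (measurable_pi_apply m')
  refine (Measure.prod_eq fun s t hs ht => ?_).symm
  rw [Measure.map_apply hmeas (hs.prod ht)]
  have hpre : (fun z : Fin k → Fin n → ℝ => (z m, z m')) ⁻¹' (s ×ˢ t)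
      = Set.pi Set.univ (fun j => if j = m then s else if j = m' then t else Set.univ) := by
    ext z
    simp only [Set.mem_preimage, Set.mem_prod, Set.mem_pi, Set.mem_univ, true_implies]
    constructor
    · rintro ⟨h1, h2⟩ j
      rcases eq_or_ne j m with rfl | hj1
      · simpa using h1
      · rcases eq_or_ne j m' with rfl | hj2
        · simp only [if_neg hj1, if_pos rfl]
          exact h2
        · simp [hj1, hj2]
    · intro hz
      constructor
      · have h1 := hz m
        simpa using h1
      · have h2 := hz m'
        simpa [if_neg h.symm] using h2
  rw [hpre, Measure.pi_pi]
  rw [← Finset.prod_subset (Finset.subset_univ {m, m'}) (fun j _ hj => ?_)]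
  · rw [Finset.prod_pair h]
    have hm : (if m = m then s else if m = m' then t else Set.univ) = s := by simp
    have hm' : (if m' = m then s else if m' = m' then t else Set.univ) = t := by
      simp [if_neg h.symm]
    rw [hm, hm']
  · simp only [Finset.mem_insert, Finset.mem_singleton] at hj
    push_neg at hj
    simp [if_neg hj.1, if_neg hj.2]

lemma tie_null {k : ℕ} {m m' : Fin k} (h : m ≠ m') {F : (Fin n → ℝ) → ℝ}
    (hFm : Measurable F) (hlevel : ∀ t : ℝ, stdGaussian n {x | F x = t} = 0) :
    (Measure.pi fun _ : Fin k => stdGaussian n) {z | F (z m) = F (z m')} = 0 := by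
  have hmeas_pair : Measurable fun z : Fin k → Fin n → ℝ => (z m, z m') :=
    (measurable_pi_apply m).prodMk (measurable_pi_apply m')
  have hsetm : MeasurableSet {p : (Fin n → ℝ) × (Fin n → ℝ) | F p.1 = F p.2} :=
    measurableSet_eq_fun (hFm.comp measurable_fst) (hFm.comp measurable_snd)
  have hpre : {z : Fin k → Fin n → ℝ | F (z m) = F (z m')}
      = (fun z => (z m, z m')) ⁻¹' {p | F p.1 = F p.2} := rfl
  rw [hpre, ← Measure.map_apply hmeas_pair hsetm, pi_map_pair h,
    Measure.prod_apply_symm hsetm]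
  have hz : ∀ y, stdGaussian n ((fun x => (x, y)) ⁻¹' {p | F p.1 = F p.2}) = 0 := by
    intro y
    have h2 : ((fun x => (x, y)) ⁻¹' {p | F p.1 = F p.2}) = {x | F x = F y} := rfl
    rw [h2]
    exact hlevel (F y)
  rw [lintegral_congr hz, lintegral_zero]

lemma F_level_null (hn : 0 < n) {A : Matrix (Fin n) (Fin n) ℝ} (hA : A.IsHermitian)
    {c : ℝ} (hc : 0 < c) (t : ℝ) :
    stdGaussian n {x | lamMax (A + c • Matrix.vecMulVec x x) = t} = 0 := by
  obtain ⟨u, horm, heig, hexp, hpar, hquad⟩ := herm_decomp A hA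
  obtain ⟨istar, histar⟩ := exists_lamMax_index hn hA
  have hu1 : u istar ⬝ᵥ u istar = 1 := by simpa using horm istar istar
  have hu0 : u istar ≠ 0 := by intro h; rw [h] at hu1; simp at hu1
  have hgt : ∀ x : Fin n → ℝ, x ⬝ᵥ u istar ≠ 0 →
      lamMax A < lamMax (A + c • Matrix.vecMulVec x x) := by
    intro x hx
    have hherm := isHermitian_perturb hA c x
    have hray := rayleigh_le hherm (u istar)
    rw [hu1, mul_one] at hray
    have hval : u istar ⬝ᵥ (A + c • Matrix.vecMulVec x x) *ᵥ u istar
        = lamMax A + c * (x ⬝ᵥ u istar) ^ 2 := by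
      rw [Matrix.add_mulVec, dotProduct_add, Matrix.smul_mulVec,
        vecMulVec_mulVec' x (u istar), heig istar]
      simp only [dotProduct_smul, smul_eq_mul, hu1, mul_one]
      rw [histar, dotProduct_comm (u istar) x]
      ring
    have hpos : 0 < c * (x ⬝ᵥ u istar) ^ 2 := by positivity
    linarith
  rcases le_or_gt t (lamMax A) with hle | hlt
  · refine measure_mono_null (fun x hx => ?_) (stdGaussian_null_hyperplane hu0)
    rw [Set.mem_setOf_eq] at hx ⊢
    by_contra hxx
    have h2 := hgt x hxx
    rw [hx] at h2
    linarith
  · set Q : Matrix (Fin n) (Fin n) ℝ :=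
      Matrix.of fun p q => ∑ i, (c / (t - hA.eigenvalues i)) * (u i p * u i q) with hQ
    have hQeval : ∀ x, x ⬝ᵥ Q *ᵥ x = ∑ i, (c / (t - hA.eigenvalues i)) * (u i ⬝ᵥ x) ^ 2 :=
      fun x => quad_eval u _ x
    have hpos : ∀ x : Fin n → ℝ, x ≠ 0 → 0 < x ⬝ᵥ Q *ᵥ x := by
      intro x hx
      rw [hQeval]
      have hterm : ∀ i, 0 ≤ (c / (t - hA.eigenvalues i)) * (u i ⬝ᵥ x) ^ 2 := by
        intro i
        have h1 : 0 < t - hA.eigenvalues i := by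
          have := eig_le_lamMax hA i; linarith
        positivity
      have hex : ∃ i, u i ⬝ᵥ x ≠ 0 := by
        by_contra hco
        push_neg at hco
        have h0 : x ⬝ᵥ x = 0 := by
          rw [hpar x x]
          exact Finset.sum_eq_zero fun i _ => by rw [hco i]; ring
        exact hx (dotProduct_self_eq_zero.mp h0)
      obtain ⟨i, hi⟩ := hex
      have hipos : 0 < (c / (t - hA.eigenvalues i)) * (u i ⬝ᵥ x) ^ 2 := by
        have h1 : 0 < t - hA.eigenvalues i := by
          have := eig_le_lamMax hA i; linarith
        have h2 : 0 < (u i ⬝ᵥ x) ^ 2 := by positivity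
        positivity
      calc (0 : ℝ) < (c / (t - hA.eigenvalues i)) * (u i ⬝ᵥ x) ^ 2 := hipos
        _ ≤ ∑ i, (c / (t - hA.eigenvalues i)) * (u i ⬝ᵥ x) ^ 2 :=
            Finset.single_le_sum (fun i _ => hterm i) (Finset.mem_univ i)
    refine measure_mono_null (fun x hx => ?_)
      (measure_union_null (stdGaussian_null_hyperplane hu0)
        (stdGaussian_null_quadric hn Q hpos))
    rw [Set.mem_setOf_eq] at hx
    by_cases hxu : x ⬝ᵥ u istar = 0
    · exact Or.inl hxu
    · right
      have hherm := isHermitian_perturb hA c x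
      obtain ⟨v, hv1, hveig⟩ := lamMax_attained hn hherm
      rw [hx] at hveig
      have hv0 : v ≠ 0 := fun h => by rw [h] at hv1; simp at hv1
      have hq := perturb_q hA heig hpar hlt hveig hv0
      rw [Set.mem_setOf_eq, hQeval]
      exact hq

end Null

section Key

lemma vecMulVec_conj {n : ℕ} (S : Matrix (Fin n) (Fin n) ℝ) (x : Fin n → ℝ) :
    Matrix.vecMulVec (S *ᵥ x) (S *ᵥ x) = S * Matrix.vecMulVec x x * Sᵀ := by
  ext p q
  simp only [Matrix.vecMulVec_apply, Matrix.mul_apply, Matrix.transpose_apply,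
    Matrix.mulVec, dotProduct]
  rw [Finset.sum_mul_sum]
  rw [Finset.sum_comm]
  refine Finset.sum_congr rfl fun b _ => ?_
  rw [Finset.sum_mul]
  refine Finset.sum_congr rfl fun a' _ => ?_
  ring

lemma perturb_conj {n : ℕ} {X : Matrix (Fin n) (Fin n) ℝ} {S : Matrix (Fin n) (Fin n) ℝ}
    (hSX : S * X * Sᵀ = X) (c : ℝ) (x : Fin n → ℝ) :
    X + c • Matrix.vecMulVec (S *ᵥ x) (S *ᵥ x)
      = S * (X + c • Matrix.vecMulVec x x) * Sᵀ := by
  rw [vecMulVec_conj, Matrix.mul_add, Matrix.add_mul, hSX]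
  congr 1
  rw [Matrix.mul_smul, Matrix.smul_mul]

lemma key_sign {n k : ℕ} (hn : 0 < n) {X : Matrix (Fin n) (Fin n) ℝ} (hX : X.IsHermitian)
    {c : ℝ} (hc : 0 < c) {φ : (Fin k → Fin n → ℝ) → Fin n → ℝ}
    (hφ : ∀ᵐ z ∂(Measure.pi fun _ : Fin k => stdGaussian n), ∃ i₀ : Fin k,
      (∀ j, lamMax (X + c • Matrix.vecMulVec (z j) (z j)) ≤
        lamMax (X + c • Matrix.vecMulVec (z i₀) (z i₀))) ∧
      (X + c • Matrix.vecMulVec (z i₀) (z i₀)) *ᵥ (φ z) =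
        lamMax (X + c • Matrix.vecMulVec (z i₀) (z i₀)) • φ z ∧
      ∑ i, φ z i ^ 2 = 1)
    (S : Matrix (Fin n) (Fin n) ℝ) (h1 : S * Sᵀ = 1) (h2 : Sᵀ * S = 1)
    (hSX : S * X * Sᵀ = X) :
    ∀ᵐ z ∂(Measure.pi fun _ : Fin k => stdGaussian n),
      φ (fun m => S *ᵥ z m) = S *ᵥ φ z ∨ φ (fun m => S *ᵥ z m) = -(S *ᵥ φ z) := by
  classical
  set μ := Measure.pi fun _ : Fin k => stdGaussian n with hμ
  set F : (Fin n → ℝ) → ℝ := fun x => lamMax (X + c • Matrix.vecMulVec x x) with hF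
  obtain ⟨u, horm, heig, hexp, hpar, hquad⟩ := herm_decomp X hX
  obtain ⟨istar, histar⟩ := exists_lamMax_index hn hX
  have hu1 : u istar ⬝ᵥ u istar = 1 := by simpa using horm istar istar
  have hu0 : u istar ≠ 0 := by intro h; rw [h] at hu1; simp at hu1
  -- strict gap
  have hgt : ∀ x : Fin n → ℝ, x ⬝ᵥ u istar ≠ 0 → lamMax X < F x := by
    intro x hx
    have hherm := isHermitian_perturb hX c x
    have hray := rayleigh_le hherm (u istar)
    rw [hu1, mul_one] at hray
    have hval : u istar ⬝ᵥ (X + c • Matrix.vecMulVec x x) *ᵥ u istar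
        = lamMax X + c * (x ⬝ᵥ u istar) ^ 2 := by
      rw [Matrix.add_mulVec, dotProduct_add, Matrix.smul_mulVec,
        vecMulVec_mulVec' x (u istar), heig istar]
      simp only [dotProduct_smul, smul_eq_mul, hu1, mul_one]
      rw [histar, dotProduct_comm (u istar) x]
      ring
    have hpos : 0 < c * (x ⬝ᵥ u istar) ^ 2 := by positivity
    show lamMax X < lamMax (X + c • Matrix.vecMulVec x x)
    linarith
  -- measure preservation
  have hT : MeasurePreserving (fun z : Fin k → Fin n → ℝ => fun m => S *ᵥ z m) μ μ :=
    measurePreserving_pi _ _ fun _ => measurePreserving_mulVec_stdGaussian S h1 h2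
  have hφT : ∀ᵐ z ∂μ, ∃ i₀ : Fin k,
      (∀ j, lamMax (X + c • Matrix.vecMulVec (S *ᵥ z j) (S *ᵥ z j)) ≤
        lamMax (X + c • Matrix.vecMulVec (S *ᵥ z i₀) (S *ᵥ z i₀))) ∧
      (X + c • Matrix.vecMulVec (S *ᵥ z i₀) (S *ᵥ z i₀)) *ᵥ (φ fun m => S *ᵥ z m) =
        lamMax (X + c • Matrix.vecMulVec (S *ᵥ z i₀) (S *ᵥ z i₀)) • (φ fun m => S *ᵥ z m) ∧
      ∑ i, (φ fun m => S *ᵥ z m) i ^ 2 = 1 :=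
    hT.quasiMeasurePreserving.ae hφ
  -- a.e. projections nonzero
  have hmdot : Measurable fun x : Fin n → ℝ => x ⬝ᵥ u istar :=
    Finset.measurable_sum _ fun i _ => (measurable_pi_apply i).mul_const _
  have hcyl : ∀ (m : Fin k) (H : Set (Fin n → ℝ)), stdGaussian n H = 0 → MeasurableSet H →
      μ ((fun z : Fin k → Fin n → ℝ => z m) ⁻¹' H) = 0 := by
    intro m H hH0 hHm
    have hps : ((fun z : Fin k → Fin n → ℝ => z m) ⁻¹' H)
        = Set.pi Set.univ
          (Function.update (fun _ : Fin k => (Set.univ : Set (Fin n → ℝ))) m H) := by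
      ext z
      simp only [Set.mem_preimage, Set.mem_pi, Set.mem_univ, true_implies]
      constructor
      · intro hz j
        rcases eq_or_ne j m with rfl | hj
        · rwa [Function.update_self]
        · rw [Function.update_of_ne hj]; trivial
      · intro hz
        have := hz m
        rwa [Function.update_self] at this
    rw [hμ, hps, Measure.pi_pi]
    refine Finset.prod_eq_zero (Finset.mem_univ m) ?_
    rw [Function.update_self]
    exact hH0
  have hE1 : ∀ᵐ z ∂μ, ∀ m, z m ⬝ᵥ u istar ≠ 0 := by
    rw [ae_all_iff]
    intro m
    rw [ae_iff]
    have hset : {z : Fin k → Fin n → ℝ | ¬ z m ⬝ᵥ u istar ≠ 0}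
        = (fun z : Fin k → Fin n → ℝ => z m) ⁻¹' {x | x ⬝ᵥ u istar = 0} := by
      ext z; simp
    rw [hset]
    exact hcyl m _ (stdGaussian_null_hyperplane hu0) (hmdot (measurableSet_singleton 0))
  -- continuity / measurability of F
  have hFcont : Continuous F := by
    apply continuous_lamMax_comp hn (g := fun x => X + c • Matrix.vecMulVec x x)
    · intro i j
      show Continuous fun x : Fin n → ℝ => X i j + c * (x i * x j)
      exact continuous_const.add
        (continuous_const.mul ((continuous_apply i).mul (continuous_apply j)))
    · exact fun x => herm_transpose_eq (isHermitian_perturb hX c x)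
  have hE2 : ∀ᵐ z ∂μ, ∀ m m', m ≠ m' → F (z m) ≠ F (z m') := by
    rw [ae_all_iff]
    intro m
    rw [ae_all_iff]
    intro m'
    rcases eq_or_ne m m' with rfl | hne
    · filter_upwards with z h
      exact absurd rfl h
    · have htie := tie_null hne hFcont.measurable fun t => F_level_null hn hX hc t
      rw [ae_iff]
      refine measure_mono_null (fun z hz => ?_) htie
      simp only [Set.mem_setOf_eq] at hz ⊢
      by_contra hFne
      exact hz fun _ => hFne
  -- main a.e. argument
  filter_upwards [hφ, hφT, hE1, hE2] with z hP hPT hE1z hE2z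
  obtain ⟨i₀, hmax, heigφ, hnorm⟩ := hP
  obtain ⟨i₁, hmax', heigφ', hnorm'⟩ := hPT
  have hFS : ∀ x : Fin n → ℝ, F (S *ᵥ x) = F x := by
    intro x
    show lamMax (X + c • Matrix.vecMulVec (S *ᵥ x) (S *ᵥ x)) = _
    rw [perturb_conj hSX]
    exact lamMax_conj hn h1 h2 (herm_transpose_eq (isHermitian_perturb hX c x))
  have hmax'' : ∀ j, F (z j) ≤ F (z i₁) := by
    intro j
    have := hmax' j
    rwa [show lamMax (X + c • Matrix.vecMulVec (S *ᵥ z j) (S *ᵥ z j)) = F (z j) from hFS (z j),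
      show lamMax (X + c • Matrix.vecMulVec (S *ᵥ z i₁) (S *ᵥ z i₁)) = F (z i₁) from
        hFS (z i₁)] at this
  have hii : i₁ = i₀ := by
    by_contra hne
    exact hE2z i₁ i₀ hne (le_antisymm (hmax i₁) (hmax'' i₀))
  subst hii
  set t := F (z i₁) with hts
  set φT := φ fun m => S *ᵥ z m with hφTz
  have heigT : (S * (X + c • Matrix.vecMulVec (z i₁) (z i₁)) * Sᵀ) *ᵥ φT = t • φT := by
    have h4 := heigφ'
    rw [perturb_conj hSX,
      lamMax_conj hn h1 h2 (herm_transpose_eq (isHermitian_perturb hX c (z i₁)))] at h4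
    exact h4
  set Mz := X + c • Matrix.vecMulVec (z i₁) (z i₁) with hMz
  have hweig : Mz *ᵥ (Sᵀ *ᵥ φT) = t • (Sᵀ *ᵥ φT) := by
    have h3 : Sᵀ *ᵥ ((S * Mz * Sᵀ) *ᵥ φT) = t • (Sᵀ *ᵥ φT) := by
      rw [heigT, Matrix.mulVec_smul]
    calc Mz *ᵥ (Sᵀ *ᵥ φT) = (Mz * Sᵀ) *ᵥ φT := by rw [Matrix.mulVec_mulVec]
      _ = (Sᵀ * (S * Mz * Sᵀ)) *ᵥ φT := by
          rw [← Matrix.mul_assoc, ← Matrix.mul_assoc, h2, Matrix.one_mul]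
      _ = t • (Sᵀ *ᵥ φT) := by rw [← Matrix.mulVec_mulVec]; exact h3
  have hdotsq : ∀ v : Fin n → ℝ, v ⬝ᵥ v = ∑ i, v i ^ 2 := by
    intro v; simp [dotProduct, sq]
  have hφ1 : φ z ⬝ᵥ φ z = 1 := by rw [hdotsq]; exact hnorm
  have hφT1 : Sᵀ *ᵥ φT ⬝ᵥ (Sᵀ *ᵥ φT) = 1 := by
    rw [dot_conj h1, hdotsq]
    exact hnorm'
  have ht_gt : lamMax X < t := hgt (z i₁) (hE1z i₁)
  have hsign := perturb_sign hX ht_gt heigφ hweig hφ1 hφT1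
  have hrec : φT = S *ᵥ (Sᵀ *ᵥ φT) := by
    rw [Matrix.mulVec_mulVec, h1, Matrix.one_mulVec]
  rcases hsign with hcase | hcase
  · left
    rw [hrec, ← hcase]
  · right
    rw [hrec, show Sᵀ *ᵥ φT = -(φ z) from by rw [hcase]; simp, Matrix.mulVec_neg]

end Key

theorem stmt19 {n k : ℕ} (hn : 0 < n) (hk : 1 ≤ k)
    (X : Matrix (Fin n) (Fin n) ℝ) (hX : X.IsHermitian) (ε : ℝ) (hε : 0 < ε)
    (φ : (Fin k → Fin n → ℝ) → Fin n → ℝ) (hφm : Measurable φ)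
    (hφ : ∀ᵐ z ∂(Measure.pi fun _ : Fin k => stdGaussian n), ∃ i₀ : Fin k,
      (∀ j, lamMax (X + (ε / n) • Matrix.vecMulVec (z j) (z j)) ≤
        lamMax (X + (ε / n) • Matrix.vecMulVec (z i₀) (z i₀))) ∧
      (X + (ε / n) • Matrix.vecMulVec (z i₀) (z i₀)).mulVec (φ z) =
        lamMax (X + (ε / n) • Matrix.vecMulVec (z i₀) (z i₀)) • φ z ∧
      ∑ i, φ z i ^ 2 = 1) :
    (∀ (O : Matrix (Fin n) (Fin n) ℝ) (d : Fin n → ℝ),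
      O * Oᵀ = 1 → Oᵀ * O = 1 → X = Oᵀ * Matrix.diagonal d * O →
      ∃ e : Fin n → ℝ,
        (Matrix.of fun i j =>
            ∫ z, φ z i * φ z j ∂(Measure.pi fun _ : Fin k => stdGaussian n)) =
          Oᵀ * Matrix.diagonal e * O) ∧
    ((∃ dX : Fin n → ℝ, X = Matrix.diagonal dX) → ∀ i j : Fin n, i ≠ j →
      (∫ z, φ z i * φ z j ∂(Measure.pi fun _ : Fin k => stdGaussian n)) = 0) := by
  classical
  set μ := Measure.pi fun _ : Fin k => stdGaussian n with hμd
  have hnr : (0 : ℝ) < (n : ℝ) := by exact_mod_cast hn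
  have hc : 0 < ε / (n : ℝ) := div_pos hε hnr
  have hφmeas : ∀ a : Fin n, Measurable fun z => φ z a := fun a =>
    (measurable_pi_apply a).comp hφm
  have hbound : ∀ a b : Fin n, ∀ᵐ z ∂μ, ‖φ z a * φ z b‖ ≤ 1 := by
    intro a b
    filter_upwards [hφ] with z hz
    obtain ⟨i₀, -, -, hnorm⟩ := hz
    have hsq : ∀ i, φ z i ^ 2 ≤ 1 := fun i =>
      le_trans (Finset.single_le_sum (fun j _ => sq_nonneg (φ z j)) (Finset.mem_univ i))
        hnorm.le
    have hba : |φ z a| ≤ 1 := abs_le_one_iff_mul_self_le_one.mpr (by rw [← sq]; exact hsq a)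
    have hbb : |φ z b| ≤ 1 := abs_le_one_iff_mul_self_le_one.mpr (by rw [← sq]; exact hsq b)
    calc ‖φ z a * φ z b‖ = |φ z a| * |φ z b| := by rw [Real.norm_eq_abs, abs_mul]
      _ ≤ 1 * 1 := mul_le_mul hba hbb (abs_nonneg _) zero_le_one
      _ = 1 := one_mul 1
  have hint : ∀ a b : Fin n, Integrable (fun z => φ z a * φ z b) μ := by
    intro a b
    exact Integrable.mono' (integrable_const 1)
      (((hφmeas a).mul (hφmeas b)).aestronglyMeasurable) (hbound a b)
  -- core vanishing lemma
  have core : ∀ (O : Matrix (Fin n) (Fin n) ℝ) (d : Fin n → ℝ),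
      O * Oᵀ = 1 → Oᵀ * O = 1 → X = Oᵀ * Matrix.diagonal d * O →
      ∀ a b : Fin n, a ≠ b → (∫ z, (O *ᵥ φ z) a * (O *ᵥ φ z) b ∂μ) = 0 := by
    intro O d hO1 hO2 hXd a b hab
    set R : Matrix (Fin n) (Fin n) ℝ := Matrix.diagonal fun t => if t = a then (-1 : ℝ) else 1
      with hRd
    have hRT : Rᵀ = R := Matrix.diagonal_transpose _
    have hRR : R * R = 1 := by
      rw [hRd, Matrix.diagonal_mul_diagonal,
        show (fun t => (if t = a then (-1 : ℝ) else 1) * (if t = a then (-1 : ℝ) else 1))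
          = fun _ => (1 : ℝ) from funext fun t => by split_ifs <;> norm_num]
      exact Matrix.diagonal_one
    set S := Oᵀ * R * O with hSd
    have hST : Sᵀ = S := by
      rw [hSd, Matrix.transpose_mul, Matrix.transpose_mul, Matrix.transpose_transpose, hRT,
        Matrix.mul_assoc]
    have hSS : S * S = 1 := by
      rw [hSd]
      have e : Oᵀ * R * O * (Oᵀ * R * O) = Oᵀ * (R * ((O * Oᵀ) * (R * O))) := by
        simp only [Matrix.mul_assoc]
      rw [e, hO1, Matrix.one_mul, ← Matrix.mul_assoc R R O, hRR, Matrix.one_mul, hO2]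
    have hS1 : S * Sᵀ = 1 := by rw [hST]; exact hSS
    have hS2 : Sᵀ * S = 1 := by rw [hST]; exact hSS
    have hRD : R * Matrix.diagonal d * R = Matrix.diagonal d := by
      rw [hRd, Matrix.diagonal_mul_diagonal, Matrix.diagonal_mul_diagonal]
      ext t s
      rcases eq_or_ne t s with rfl | hts
      · rw [Matrix.diagonal_apply_eq, Matrix.diagonal_apply_eq]
        split_ifs <;> ring
      · rw [Matrix.diagonal_apply_ne _ hts, Matrix.diagonal_apply_ne _ hts]
    have hSX : S * X * Sᵀ = X := by
      rw [hST, hSd, hXd]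
      have e : Oᵀ * R * O * (Oᵀ * Matrix.diagonal d * O) * (Oᵀ * R * O)
          = Oᵀ * (R * ((O * Oᵀ) * (Matrix.diagonal d * ((O * Oᵀ) * (R * O))))) := by
        simp only [Matrix.mul_assoc]
      rw [e, hO1, Matrix.one_mul, Matrix.one_mul]
      have e2 : Oᵀ * (R * (Matrix.diagonal d * (R * O)))
          = Oᵀ * ((R * Matrix.diagonal d * R) * O) := by simp only [Matrix.mul_assoc]
      rw [e2, hRD]
      simp only [Matrix.mul_assoc]
    have key := key_sign hn hX hc hφ S hS1 hS2 hSX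
    set Te : (Fin k → Fin n → ℝ) ≃ᵐ (Fin k → Fin n → ℝ) :=
      MeasurableEquiv.piCongrRight fun _ : Fin k => mulVecEquiv S hS1 hS2 with hTe
    have hT : MeasurePreserving (⇑Te) μ μ :=
      measurePreserving_pi _ _ fun _ => measurePreserving_mulVec_stdGaussian S hS1 hS2
    have hOS : O * S = R * O := by
      rw [hSd, ← Matrix.mul_assoc, ← Matrix.mul_assoc, hO1, Matrix.one_mul]
    have hcomp : ∀ w : Fin n → ℝ, (O *ᵥ (S *ᵥ w)) a * (O *ᵥ (S *ᵥ w)) b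
        = -((O *ᵥ w) a * (O *ᵥ w) b) := by
      intro w
      rw [Matrix.mulVec_mulVec, hOS, ← Matrix.mulVec_mulVec]
      rw [show (R *ᵥ (O *ᵥ w)) a = -((O *ᵥ w) a) from by
          rw [hRd, Matrix.mulVec_diagonal]; simp,
        show (R *ᵥ (O *ᵥ w)) b = (O *ᵥ w) b from by
          rw [hRd, Matrix.mulVec_diagonal]; simp [Ne.symm hab]]
      ring
    have step1 : ∫ z, (O *ᵥ φ z) a * (O *ᵥ φ z) b ∂μ
        = ∫ z, (O *ᵥ φ (Te z)) a * (O *ᵥ φ (Te z)) b ∂μ :=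
      (hT.integral_comp' fun y => (O *ᵥ φ y) a * (O *ᵥ φ y) b).symm
    have step2 : ∫ z, (O *ᵥ φ (Te z)) a * (O *ᵥ φ (Te z)) b ∂μ
        = ∫ z, -((O *ᵥ φ z) a * (O *ᵥ φ z) b) ∂μ := by
      refine integral_congr_ae ?_
      filter_upwards [key] with z hz
      have hTez : Te z = fun m => S *ᵥ z m := rfl
      rcases hz with h | h
      · rw [hTez, h]
        exact hcomp (φ z)
      · rw [hTez, h, Matrix.mulVec_neg]
        simp only [Pi.neg_apply, neg_mul_neg]
        exact hcomp (φ z)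
    have step3 : ∫ z, -((O *ᵥ φ z) a * (O *ᵥ φ z) b) ∂μ
        = -∫ z, (O *ᵥ φ z) a * (O *ᵥ φ z) b ∂μ := integral_neg _
    have hI := step1.trans (step2.trans step3)
    linarith
  -- matrix of integrals in rotated frame
  have hOE : ∀ (O : Matrix (Fin n) (Fin n) ℝ) (a b : Fin n),
      (O * (Matrix.of fun i j => ∫ z, φ z i * φ z j ∂μ) * Oᵀ) a b
        = ∫ z, (O *ᵥ φ z) a * (O *ᵥ φ z) b ∂μ := by
    intro O a b
    have expand : ∀ z, (O *ᵥ φ z) a * (O *ᵥ φ z) b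
        = ∑ i, ∑ j, O a i * O b j * (φ z i * φ z j) := by
      intro z
      show (∑ i, O a i * φ z i) * (∑ j, O b j * φ z j) = _
      rw [Finset.sum_mul_sum]
      exact Finset.sum_congr rfl fun i _ => Finset.sum_congr rfl fun j _ => by ring
    have hrhs : ∫ z, (O *ᵥ φ z) a * (O *ᵥ φ z) b ∂μ
        = ∑ i, ∑ j, O a i * O b j * ∫ z, φ z i * φ z j ∂μ := by
      rw [show (fun z => (O *ᵥ φ z) a * (O *ᵥ φ z) b)
          = fun z => ∑ i, ∑ j, O a i * O b j * (φ z i * φ z j) from funext expand]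
      rw [integral_finset_sum _ fun i _ =>
        integrable_finset_sum _ fun j _ => ((hint i j).const_mul _)]
      refine Finset.sum_congr rfl fun i _ => ?_
      rw [integral_finset_sum _ fun j _ => ((hint i j).const_mul _)]
      exact Finset.sum_congr rfl fun j _ => integral_const_mul _ _
    rw [hrhs]
    simp only [Matrix.mul_apply, Matrix.transpose_apply, Matrix.of_apply]
    rw [Finset.sum_comm]
    refine Finset.sum_congr rfl fun j _ => ?_
    rw [Finset.sum_mul]
    refine Finset.sum_congr rfl fun i _ => ?_
    ring
  have main : ∀ (O : Matrix (Fin n) (Fin n) ℝ) (d : Fin n → ℝ),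
      O * Oᵀ = 1 → Oᵀ * O = 1 → X = Oᵀ * Matrix.diagonal d * O →
      ∃ e : Fin n → ℝ,
        (Matrix.of fun i j => ∫ z, φ z i * φ z j ∂μ) = Oᵀ * Matrix.diagonal e * O := by
    intro O d hO1 hO2 hXd
    set E := Matrix.of fun i j => ∫ z, φ z i * φ z j ∂μ with hE
    refine ⟨fun t => (O * E * Oᵀ) t t, ?_⟩
    have hdiag : O * E * Oᵀ = Matrix.diagonal fun t => (O * E * Oᵀ) t t := by
      ext a b
      rcases eq_or_ne a b with rfl | hab
      · rw [Matrix.diagonal_apply_eq]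
      · rw [Matrix.diagonal_apply_ne _ hab, hOE O a b, core O d hO1 hO2 hXd a b hab]
    calc E = (Oᵀ * O) * E * (Oᵀ * O) := by rw [hO2, Matrix.one_mul, Matrix.mul_one]
      _ = Oᵀ * (O * E * Oᵀ) * O := by simp only [Matrix.mul_assoc]
      _ = Oᵀ * Matrix.diagonal (fun t => (O * E * Oᵀ) t t) * O := by rw [← hdiag]
  refine ⟨main, ?_⟩
  rintro ⟨dX, hdX⟩ i j hij
  have h0 := core 1 dX (by simp) (by simp)
    (by simpa [Matrix.transpose_one] using hdX) i j hij
  simpa [Matrix.one_mulVec] using h0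
end
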